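/- Let F ∈ k[t]^{n×n} be a row reduced matrix with det F ≠ 0. Then every entry of the inverse matrix F^{−1} ∈ k(t)^{n×n} has degree at most 0 (where the degree of a nonzero rational function g/h is deg g − deg h). In particular, if moreover deg F ≤ d and t^d·F^{−1} has entries in k[t], then deg(t^d·F^{−1}) ≤ d. -/
import Mathlib


open Classical

/-- Degree of a rational function, with `deg 0 = ⊥`. -/
noncomputable def ratDeg {k : Type*} [Field k] (z : RatFunc k) : WithBot ℤ :=
  if z = 0 then ⊥ else (z.intDegree : WithBot ℤ)

/-- Degree of a row vector: the maximum of the degrees of its entries. -/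
noncomputable def rowDeg {k : Type*} [Field k] {n : ℕ} (b : Fin n → RatFunc k) : WithBot ℤ :=
  Finset.univ.sup fun j => ratDeg (b j)

/-- A square matrix over `k(t)` with rows `b₀, …, b_{n-1}` is row reduced if
`deg (Σ λᵢ bᵢ) = maxᵢ deg (λᵢ bᵢ)` for all `λᵢ ∈ k(t)`. -/
def RowReduced {k : Type*} [Field k] {n : ℕ} (M : Matrix (Fin n) (Fin n) (RatFunc k)) : Prop :=
  ∀ c : Fin n → RatFunc k,
    rowDeg (fun j => ∑ i, c i * M i j) = Finset.univ.sup fun i => ratDeg (c i) + rowDeg (M i)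

/-- If `F ∈ k[t]^{n×n}` is row reduced with `det F ≠ 0`, then all entries of `F⁻¹` have
degree at most `0`; in particular if `deg F ≤ d` and `t^d·F⁻¹` has polynomial entries then
`deg (t^d·F⁻¹) ≤ d`. -/
theorem stmt_14 {k : Type*} [Field k] {n : ℕ}
    (F : Matrix (Fin n) (Fin n) (Polynomial k)) (hF : F.det ≠ 0)
    (hred : RowReduced (F.map ⇑(algebraMap (Polynomial k) (RatFunc k)))) :
    (∀ i j : Fin n, ratDeg ((F.map ⇑(algebraMap (Polynomial k) (RatFunc k)))⁻¹ i j) ≤ 0) ∧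
    ∀ d : ℕ, (∀ i j : Fin n, (F i j).natDegree ≤ d) →
      ∀ i j : Fin n, ∀ g : Polynomial k,
        (RatFunc.X : RatFunc k) ^ d * (F.map ⇑(algebraMap (Polynomial k) (RatFunc k)))⁻¹ i j =
          algebraMap (Polynomial k) (RatFunc k) g →
        g.natDegree ≤ d := by
  set f := algebraMap (Polynomial k) (RatFunc k) with hf
  set M := F.map ⇑f with hM
  have hdetM : M.det ≠ 0 := by
    have hd : M.det = f F.det := (RingHom.map_det f F).symm
    rw [hd, hf]
    exact fun h => hF (RatFunc.algebraMap_injective k (by simpa using h))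
  have hGM : M⁻¹ * M = 1 := Matrix.nonsing_inv_mul M (isUnit_iff_ne_zero.mpr hdetM)
  -- row degrees of M are ≥ 0
  have hrow : ∀ l : Fin n, (0 : WithBot ℤ) ≤ rowDeg (M l) := by
    intro l
    by_contra h
    push_neg at h
    have hzero : ∀ j, F l j = 0 := by
      intro j
      by_contra hne
      have h1 : ratDeg (M l j) ≤ rowDeg (M l) :=
        Finset.le_sup (f := fun j => ratDeg (M l j)) (Finset.mem_univ j)
      have h2 : ratDeg (M l j) = ((F l j).natDegree : ℤ) := by
        rw [ratDeg, if_neg]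
        · have : M l j = f (F l j) := rfl
          rw [this, hf, RatFunc.intDegree_polynomial]
        · have : M l j = f (F l j) := rfl
          rw [this, hf]
          exact fun hh => hne (RatFunc.algebraMap_injective k (by simpa using hh))
      rw [h2] at h1
      exact absurd (lt_of_le_of_lt h1 h) (by exact_mod_cast not_lt.mpr (by positivity))
    exact hF (Matrix.det_eq_zero_of_row_eq_zero l (by simpa using hzero))
  have part1 : ∀ i j : Fin n, ratDeg (M⁻¹ i j) ≤ 0 := by
    intro i j
    have key := hred (fun l => M⁻¹ i l)
    have hsum : (fun jj => ∑ l, M⁻¹ i l * M l jj) = fun jj => (1 : Matrix (Fin n) (Fin n) (RatFunc k)) i jj := by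
      funext jj
      rw [← hGM]
      simp [Matrix.mul_apply]
    rw [hsum] at key
    have hlhs : rowDeg (fun jj => (1 : Matrix (Fin n) (Fin n) (RatFunc k)) i jj) = 0 := by
      apply le_antisymm
      · apply Finset.sup_le
        intro jj _
        by_cases h : i = jj
        · simp [ratDeg, Matrix.one_apply, h]
        · simp [ratDeg, Matrix.one_apply, h]
      · refine le_trans ?_ (Finset.le_sup (f := fun jj => ratDeg ((1 : Matrix (Fin n) (Fin n) (RatFunc k)) i jj)) (Finset.mem_univ i))
        simp [ratDeg, Matrix.one_apply]
    rw [hlhs] at key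
    have hterm : ratDeg (M⁻¹ i j) + rowDeg (M j) ≤ 0 := by
      rw [key]
      exact Finset.le_sup (f := fun l => ratDeg (M⁻¹ i l) + rowDeg (M l)) (Finset.mem_univ j)
    calc ratDeg (M⁻¹ i j) ≤ ratDeg (M⁻¹ i j) + rowDeg (M j) := le_add_of_nonneg_right (hrow j)
      _ ≤ 0 := hterm
  refine ⟨part1, ?_⟩
  intro d _ i j g hg
  by_cases hgz : g = 0
  · simp [hgz]
  have hXd : (RatFunc.X : RatFunc k) ^ d ≠ 0 := pow_ne_zero _ RatFunc.X_ne_zero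
  have hGz : M⁻¹ i j ≠ 0 := by
    intro h
    rw [h, mul_zero, hf] at hg
    exact hgz (RatFunc.algebraMap_injective k (by simpa using hg.symm))
  have hdegXd : ((RatFunc.X : RatFunc k) ^ d).intDegree = d := by
    rw [← RatFunc.algebraMap_X, ← map_pow, RatFunc.intDegree_polynomial]
    simp
  have hdeg : (d : ℤ) + (M⁻¹ i j).intDegree = (g.natDegree : ℤ) := by
    have h2 := congrArg RatFunc.intDegree hg
    rw [hf] at h2
    rwa [RatFunc.intDegree_mul hXd hGz, RatFunc.intDegree_polynomial, hdegXd] at h2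
  have hle : (M⁻¹ i j).intDegree ≤ 0 := by
    have := part1 i j
    rw [ratDeg, if_neg hGz] at this
    exact_mod_cast this
  have : (g.natDegree : ℤ) ≤ (d : ℤ) := by linarith
  exact_mod_cast this
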